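/- arXiv:2110.14523 — 3 statements merged into one kernel-verified Lean document; each statement's English description precedes it below -/
import Mathlib

section
/- Let A be a real symmetric positive semidefinite K×K matrix with eigenvalues λ̃₁ ≤ λ̃₂ ≤ ... ≤ λ̃_K, and let Σ = diag(ω₁,...,ω_K) with ω₁ ≥ ω₂ ≥ ... ≥ ω_K ≥ 0. Then tr(ΣA) ≥ Σ_{i=1}^K ω_i λ̃_i. -/
open Matrix

open Finset in
private lemma ruhe_aux (K : ℕ) (W L : ℕ → ℝ) (p : ℕ → ℕ → ℝ)
    (hW : ∀ i j, i ≤ j → W j ≤ W i) (hW0 : ∀ i, 0 ≤ W i)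
    (hL : ∀ i j, i ≤ j → j < K → L i ≤ L j)
    (hp0 : ∀ i j, 0 ≤ p i j)
    (hrow : ∀ i < K, ∑ j ∈ range K, p i j = 1)
    (hcol : ∀ j < K, ∑ i ∈ range K, p i j = 1) :
    ∑ i ∈ range K, W i * L i ≤ ∑ i ∈ range K, W i * ∑ j ∈ range K, L j * p i j := by
  set a : ℕ → ℝ := fun i => ∑ j ∈ range K, L j * p i j with ha
  -- partial sums inequality
  have hswap : ∀ m, ∑ i ∈ range m, a i = ∑ j ∈ range K, L j * ∑ i ∈ range m, p i j := by
    intro m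
    rw [Finset.sum_comm]
    exact Finset.sum_congr rfl fun j _ => by rw [Finset.mul_sum]
  have hcsum : ∀ m ≤ K, ∑ j ∈ range K, ∑ i ∈ range m, p i j = m := by
    intro m hm
    rw [Finset.sum_comm]
    rw [Finset.sum_congr rfl fun i hi => hrow i (lt_of_lt_of_le (mem_range.mp hi) hm)]
    simp
  have hT : ∀ m ≤ K, ∑ i ∈ range m, L i ≤ ∑ i ∈ range m, a i := by
    intro m hm
    rcases eq_or_lt_of_le hm with rfl | hmK
    · rw [hswap]
      apply le_of_eq
      refine Finset.sum_congr rfl fun j hj => ?_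
      rw [hcol j (mem_range.mp hj), mul_one]
    · set c : ℕ → ℝ := fun j => ∑ i ∈ range m, p i j with hc
      have hc0 : ∀ j, 0 ≤ c j := fun j => Finset.sum_nonneg fun i _ => hp0 i j
      have hc1 : ∀ j < K, c j ≤ 1 := by
        intro j hj
        rw [← hcol j hj]
        exact Finset.sum_le_sum_of_subset_of_nonneg
          (Finset.range_subset_range.mpr hm) (fun i _ _ => hp0 i j)
      have hLm : ∑ i ∈ range m, L i = ∑ j ∈ range K, (if j < m then L j else 0) := by
        rw [← Finset.sum_filter]
        congr 1
        ext j
        simp only [Finset.mem_filter, Finset.mem_range]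
        constructor
        · intro h; exact ⟨lt_of_lt_of_le h hm, h⟩
        · intro h; exact h.2
      rw [hswap, hLm]
      have key : ∀ j ∈ range K,
          0 ≤ (L j - L m) * (c j - (if j < m then 1 else 0)) := by
        intro j hj
        have hjK := mem_range.mp hj
        by_cases h : j < m
        · simp only [h, if_pos]
          have h1 : L j - L m ≤ 0 := sub_nonpos.mpr (hL j m (le_of_lt h) hmK)
          have h2 : c j - 1 ≤ 0 := sub_nonpos.mpr (hc1 j hjK)
          nlinarith
        · simp only [h, if_neg, not_false_iff, sub_zero]
          exact mul_nonneg (sub_nonneg.mpr (hL m j (le_of_not_gt h) hjK)) (hc0 j)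
      have hsum := Finset.sum_nonneg key
      have hexp : ∑ j ∈ range K, (L j - L m) * (c j - (if j < m then 1 else 0))
          = (∑ j ∈ range K, L j * c j - ∑ j ∈ range K, (if j < m then L j else 0))
            - L m * (∑ j ∈ range K, c j - ∑ j ∈ range K, (if j < m then (1:ℝ) else 0)) := by
        rw [mul_sub, Finset.mul_sum, Finset.mul_sum, ← Finset.sum_sub_distrib,
          ← Finset.sum_sub_distrib, ← Finset.sum_sub_distrib]
        refine Finset.sum_congr rfl fun j _ => ?_
        by_cases h : j < m <;> simp [h] <;> ring
      have hcK : ∑ j ∈ range K, c j = m := hcsum m hm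
      have heK : ∑ j ∈ range K, (if j < m then (1:ℝ) else 0) = m := by
        rw [← Finset.sum_filter]
        have : Finset.filter (fun j => j < m) (range K) = range m := by
          ext j
          simp only [Finset.mem_filter, Finset.mem_range]
          exact ⟨fun h => h.2, fun h => ⟨lt_of_lt_of_le h hm, h⟩⟩
        rw [this]; simp
      rw [hexp, hcK, heK, sub_self, mul_zero, sub_zero, sub_nonneg] at hsum
      exact hsum
  -- total sum equality
  have htot : ∑ i ∈ range K, a i = ∑ i ∈ range K, L i := by
    rw [hswap]
    refine Finset.sum_congr rfl fun j hj => by rw [hcol j (mem_range.mp hj), mul_one]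
  -- Abel summation
  rw [← sub_nonneg, ← Finset.sum_sub_distrib]
  have habel : ∀ i ∈ range K, W i * a i - W i * L i = W i • (a i - L i) := by
    intro i _; simp [smul_eq_mul]; ring
  rw [Finset.sum_congr rfl habel, Finset.sum_range_by_parts]
  have h1 : ∑ i ∈ range K, (a i - L i) = 0 := by
    rw [Finset.sum_sub_distrib, htot, sub_self]
  rw [h1, smul_zero, zero_sub, neg_nonneg]
  apply Finset.sum_nonpos
  intro i hi
  have hiK : i + 1 ≤ K := Nat.succ_le_of_lt (Nat.lt_of_lt_of_le (mem_range.mp hi)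
    (Nat.sub_le K 1))
  have hTi : 0 ≤ ∑ j ∈ range (i + 1), (a j - L j) := by
    rw [Finset.sum_sub_distrib, sub_nonneg]
    exact hT (i + 1) hiK
  have hWd : W (i + 1) - W i ≤ 0 := sub_nonpos.mpr (hW i (i + 1) (Nat.le_succ i))
  rw [smul_eq_mul]
  nlinarith

/-- Ruhe's trace inequality for a diagonal matrix of decreasing nonnegative weights:
if `A` is symmetric positive semidefinite with eigenvalues `lam` in nondecreasing order
(witnessed by an orthogonal diagonalization), and `ω` is nonincreasing and nonnegative,
then `tr(diag(ω) * A) ≥ ∑ i, ω i * lam i`. -/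
theorem stmt_0 (K : ℕ) (A : Matrix (Fin K) (Fin K) ℝ) (hA : A.PosSemidef)
    (ω lam : Fin K → ℝ) (hω : Antitone ω) (hω0 : ∀ i, 0 ≤ ω i)
    (hlam : Monotone lam)
    (Q : Matrix (Fin K) (Fin K) ℝ) (hQ : Qᵀ * Q = 1)
    (hdiag : Qᵀ * A * Q = Matrix.diagonal lam) :
    ∑ i, ω i * lam i ≤ (Matrix.diagonal ω * A).trace := by
  have hQ' : Q * Qᵀ = 1 := mul_eq_one_comm.mp hQ
  have hAeq : A = Q * Matrix.diagonal lam * Qᵀ := by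
    rw [← hdiag]
    calc A = (Q * Qᵀ) * A * (Q * Qᵀ) := by rw [hQ']; simp [Matrix.mul_assoc]
    _ = Q * (Qᵀ * A * Q) * Qᵀ := by simp only [Matrix.mul_assoc]
  have hAii : ∀ i, A i i = ∑ j, lam j * (Q i j)^2 := by
    intro i
    rw [hAeq, Matrix.mul_apply]
    simp only [Matrix.mul_diagonal, Matrix.transpose_apply]
    exact Finset.sum_congr rfl fun j _ => by ring
  have htr : (Matrix.diagonal ω * A).trace = ∑ i, ω i * A i i := by
    simp [Matrix.trace, Matrix.diag, Matrix.diagonal_mul]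
  rw [htr]
  have hrowF : ∀ i, ∑ j, (Q i j)^2 = 1 := by
    intro i
    have := congrArg (fun M => M i i) hQ'
    simpa [Matrix.mul_apply, Matrix.one_apply, sq] using this
  have hcolF : ∀ j, ∑ i, (Q i j)^2 = 1 := by
    intro j
    have := congrArg (fun M => M j j) hQ
    simpa [Matrix.mul_apply, Matrix.one_apply, sq] using this
  -- extend to ℕ
  set W : ℕ → ℝ := fun i => if h : i < K then ω ⟨i, h⟩ else 0 with hWdef
  set L : ℕ → ℝ := fun j => if h : j < K then lam ⟨j, h⟩ else 0 with hLdef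
  set p : ℕ → ℕ → ℝ := fun i j =>
    if h : i < K ∧ j < K then (Q ⟨i, h.1⟩ ⟨j, h.2⟩)^2 else 0 with hpdef
  have key := ruhe_aux K W L p
    (by
      intro i j hij
      by_cases hj : j < K
      · have hi : i < K := lt_of_le_of_lt hij hj
        simp only [hWdef, dif_pos hi, dif_pos hj]
        exact hω (by exact_mod_cast hij)
      · simp only [hWdef, dif_neg hj]
        by_cases hi : i < K
        · simp only [dif_pos hi]; exact hω0 _
        · simp [dif_neg hi])
    (by
      intro i
      by_cases hi : i < K
      · simp only [hWdef, dif_pos hi]; exact hω0 _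
      · simp [hWdef, dif_neg hi])
    (by
      intro i j hij hj
      have hi : i < K := lt_of_le_of_lt hij hj
      simp only [hLdef, dif_pos hi, dif_pos hj]
      exact hlam (by exact_mod_cast hij))
    (by
      intro i j
      by_cases h : i < K ∧ j < K
      · simp only [hpdef, dif_pos h]; positivity
      · simp [hpdef, dif_neg h])
    (by
      intro i hi
      have : ∑ j ∈ Finset.range K, p i j = ∑ j : Fin K, (Q ⟨i, hi⟩ j)^2 := by
        rw [← Fin.sum_univ_eq_sum_range]
        refine Finset.sum_congr rfl fun j _ => ?_
        simp [hpdef, hi, j.isLt]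
      rw [this, hrowF])
    (by
      intro j hj
      have : ∑ i ∈ Finset.range K, p i j = ∑ i : Fin K, (Q i ⟨j, hj⟩)^2 := by
        rw [← Fin.sum_univ_eq_sum_range]
        refine Finset.sum_congr rfl fun i _ => ?_
        simp [hpdef, hj, i.isLt]
      rw [this, hcolF])
  have hlhs : ∑ i, ω i * lam i = ∑ i ∈ Finset.range K, W i * L i := by
    rw [← Fin.sum_univ_eq_sum_range]
    refine Finset.sum_congr rfl fun i _ => ?_
    simp [hWdef, hLdef, i.isLt]
  have hrhs : ∑ i, ω i * A i i = ∑ i ∈ Finset.range K, W i * ∑ j ∈ Finset.range K, L j * p i j := by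
    rw [← Fin.sum_univ_eq_sum_range]
    refine Finset.sum_congr rfl fun i _ => ?_
    rw [hAii i]
    have : ∑ j ∈ Finset.range K, L j * p (↑i) j = ∑ j : Fin K, lam j * (Q i j)^2 := by
      rw [← Fin.sum_univ_eq_sum_range]
      refine Finset.sum_congr rfl fun j _ => ?_
      simp [hLdef, hpdef, i.isLt, j.isLt]
    rw [this]
    simp [hWdef, i.isLt]
  rw [hlhs, hrhs]
  exact key
end

section
/- Let H be a real Hilbert space, B a positive semidefinite symmetric bilinear form (possibly taking value +∞ outside a subspace), and suppose the min-max values λ_k := inf over k-dimensional subspaces H_k of H of sup over unit vectors f ∈ H_k of B(f,f) are attained by an orthonormal family (φ_i)_{i≥1} with B(φ_i,φ_j) = λ_i δ_{ij}. Let ω₁ > ω₂ > ... > ω_K > 0. Then the minimum of Σ_{i=1}^K ω_i B(f_i,f_i) over all orthonormal K-tuples (f₁,...,f_K) in H equals Σ_{i=1}^K ω_i λ_i, and it is attained at f_i = φ_i. -/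
open Finset in
theorem kyFanAux {H : Type*} [NormedAddCommGroup H] [InnerProductSpace ℝ H]
    (B : LinearMap.BilinForm ℝ H) (hBsymm : ∀ u v, B u v = B v u)
    (hBpsd : ∀ v, 0 ≤ B v v)
    (lam : ℕ → ℝ)
    (hminmax : ∀ k : ℕ, lam k = sInf {x : ℝ | ∃ S : Submodule ℝ H,
        Module.finrank ℝ S = k + 1 ∧
        x = sSup {y : ℝ | ∃ v ∈ S, ‖v‖ = 1 ∧ y = B v v}})
    (m : ℕ) (f : Fin m → H) (hf : Orthonormal ℝ f) :
    ∑ i : Fin m, lam i ≤ ∑ i : Fin m, B (f i) (f i) := by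
  classical
  -- expansion lemma
  have hBexp : ∀ (p q : ℕ) (c : Fin p → ℝ) (e : Fin q → ℝ) (x : Fin p → H) (y : Fin q → H),
      B (∑ a, c a • x a) (∑ b, e b • y b) = ∑ a, ∑ b, c a * e b * B (x a) (y b) := by
    intro p q c e x y
    simp only [map_sum, map_smul, LinearMap.sum_apply, LinearMap.smul_apply, smul_eq_mul,
      Finset.mul_sum]
    rw [Finset.sum_comm]
    exact Finset.sum_congr rfl fun a _ => Finset.sum_congr rfl fun b _ => by ring
  set M : Matrix (Fin m) (Fin m) ℝ := Matrix.of (fun i j => B (f i) (f j)) with hMdef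
  have hM : M.IsHermitian := by
    ext i j
    simpa [Matrix.conjTranspose, hMdef] using hBsymm (f j) (f i)
  set μ : Fin m → ℝ := hM.eigenvalues with hμdef
  set V := hM.eigenvectorBasis with hVdef
  -- images of eigenvectors in H
  set u : Fin m → H := fun j => ∑ a, (V j a) • f a with hudef
  have hinner : ∀ i j : Fin m, inner ℝ (u i) (u j) = ∑ a, V i a * V j a := by
    intro i j
    rw [hudef]
    simp only [hf.inner_sum]
    simp
  have hEucl : ∀ i j : Fin m, inner ℝ (V i) (V j) = ∑ a, V i a * V j a := by
    intro i j
    simp [PiLp.inner_apply, RCLike.inner_apply, mul_comm]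
  have hu : Orthonormal ℝ u := by
    rw [orthonormal_iff_ite]
    intro i j
    rw [hinner i j, ← hEucl i j, orthonormal_iff_ite.mp V.orthonormal i j]
  have hBu : ∀ i j : Fin m, B (u i) (u j) = if i = j then μ j else 0 := by
    intro i j
    rw [hudef]
    simp only []
    rw [hBexp]
    have hstep : ∀ a, ∑ b, V i a * V j b * B (f a) (f b) = V i a * (μ j * V j a) := by
      intro a
      have hmv : ∑ b, M a b * V j b = μ j * V j a := by
        have := congrFun (hM.mulVec_eigenvectorBasis j) a
        simpa [Matrix.mulVec, dotProduct] using this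
      calc ∑ b, V i a * V j b * B (f a) (f b) = V i a * ∑ b, M a b * V j b := by
            rw [Finset.mul_sum]; exact Finset.sum_congr rfl fun b _ => by
              simp only [hMdef, Matrix.of_apply]; ring
        _ = V i a * (μ j * V j a) := by rw [hmv]
    rw [Finset.sum_congr rfl fun a _ => hstep a]
    have : ∑ a, V i a * (μ j * V j a) = μ j * ∑ a, V i a * V j a := by
      rw [Finset.mul_sum]; exact Finset.sum_congr rfl fun a _ => by ring
    rw [this, ← hEucl i j, orthonormal_iff_ite.mp V.orthonormal i j]
    by_cases h : i = j <;> simp [h]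
  -- sort eigenvalues
  set σ := Tuple.sort μ with hσdef
  set ν : Fin m → ℝ := μ ∘ σ with hνdef
  have hνmono : Monotone ν := Tuple.monotone_sort μ
  set w : Fin m → H := u ∘ σ with hwdef
  have hw : Orthonormal ℝ w := hu.comp σ σ.injective
  have hBw : ∀ i j : Fin m, B (w i) (w j) = if i = j then ν j else 0 := by
    intro i j
    rw [hwdef]
    simp only [Function.comp_apply, hBu (σ i) (σ j), hνdef]
    by_cases h : i = j
    · simp [h]
    · rw [if_neg (fun hc => h (σ.injective hc)), if_neg h]
  -- key claim: lam k ≤ ν k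
  have hkey : ∀ k : Fin m, lam k ≤ ν k := by
    intro k
    have hn : (k : ℕ) + 1 ≤ m := k.isLt
    set g : Fin ((k : ℕ) + 1) → H := fun j => w (Fin.castLE hn j) with hgdef
    have hg : Orthonormal ℝ g := hw.comp _ (Fin.castLE_injective hn)
    set S : Submodule ℝ H := Submodule.span ℝ (Set.range g) with hSdef
    have hrank : Module.finrank ℝ S = (k : ℕ) + 1 := by
      rw [hSdef, finrank_span_eq_card hg.linearIndependent, Fintype.card_fin]
    set Y : Set ℝ := {y : ℝ | ∃ v ∈ S, ‖v‖ = 1 ∧ y = B v v} with hYdef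
    have hYne : Y.Nonempty := by
      refine ⟨B (g 0) (g 0), g 0, Submodule.subset_span ⟨0, rfl⟩, hg.1 0, rfl⟩
    have hYub : ∀ y ∈ Y, y ≤ ν k := by
      rintro y ⟨v, hvS, hv1, rfl⟩
      obtain ⟨c, hc⟩ := (Submodule.mem_span_range_iff_exists_fun ℝ).mp hvS
      have hBgv : B v v = ∑ i, ∑ j, c i * c j * B (g i) (g j) := by
        rw [← hc]; exact hBexp _ _ _ _ _ _
      have hBg : ∀ i j, B (g i) (g j) = if i = j then ν (Fin.castLE hn j) else 0 := by
        intro i j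
        rw [hgdef]
        simp only []
        rw [hBw]
        by_cases h : i = j
        · simp [h]
        · rw [if_neg (fun hc' => h (Fin.castLE_injective hn hc')), if_neg h]
      have hBv2 : B v v = ∑ i, c i * c i * ν (Fin.castLE hn i) := by
        rw [hBgv]
        refine Finset.sum_congr rfl fun i _ => ?_
        rw [Finset.sum_eq_single i (fun j _ hji => by rw [hBg, if_neg (fun h => hji h.symm)]; ring)
          (fun h => absurd (Finset.mem_univ i) h)]
        rw [hBg, if_pos rfl]
      have hnorm : ∑ i, c i * c i = 1 := by
        have h1 : inner ℝ v v = ∑ i, c i * c i := by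
          rw [← hc, hg.inner_sum]; simp
        have h2 : inner ℝ v v = 1 := by
          rw [real_inner_self_eq_norm_sq, hv1]; norm_num
        rw [← h1, h2]
      calc B v v = ∑ i, c i * c i * ν (Fin.castLE hn i) := hBv2
        _ ≤ ∑ i, c i * c i * ν k := Finset.sum_le_sum fun i _ =>
            mul_le_mul_of_nonneg_left (hνmono (by have := i.isLt; simp [Fin.le_def]; omega))
              (mul_self_nonneg _)
        _ = ν k := by rw [← Finset.sum_mul, hnorm, one_mul]
    have h1 : lam k ≤ sSup Y := by
      rw [hminmax k]
      refine csInf_le ⟨0, ?_⟩ ⟨S, hrank, rfl⟩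
      rintro x ⟨S', hS', rfl⟩
      exact Real.sSup_nonneg (by rintro y ⟨v, _, _, rfl⟩; exact hBpsd v)
    exact h1.trans (csSup_le hYne hYub)
  -- conclude
  have hsum1 : ∑ i : Fin m, lam i ≤ ∑ i : Fin m, ν i :=
    Finset.sum_le_sum fun i _ => hkey i
  have hsum2 : ∑ i : Fin m, ν i = ∑ i : Fin m, μ i := by
    rw [hνdef]
    exact Equiv.sum_comp σ μ
  have htrace : ∑ i : Fin m, μ i = ∑ i : Fin m, B (f i) (f i) := by
    have h3 : Matrix.trace M = ∑ i : Fin m, μ i := by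
      rw [hM.trace_eq_sum_eigenvalues]
      simp [hμdef]
    rw [← h3]
    simp [Matrix.trace, Matrix.diag, hMdef]
  calc ∑ i : Fin m, lam i ≤ ∑ i : Fin m, ν i := hsum1
    _ = ∑ i : Fin m, B (f i) (f i) := by rw [hsum2, htrace]



/-- Variational characterization of the first `K` eigenpairs: if the min-max values `λ_k`
of a positive semidefinite symmetric bilinear form `B` are attained by an orthonormal
family `(φ_i)` with `B(φ_i,φ_j) = λ_i δ_{ij}`, and `ω₁ > ... > ω_K > 0`, then the minimum
of `∑ ω_i B(f_i,f_i)` over orthonormal `K`-tuples equals `∑ ω_i λ_i`, attained at `f = φ`. -/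
theorem stmt_7 {H : Type*} [NormedAddCommGroup H] [InnerProductSpace ℝ H] [CompleteSpace H]
    (B : LinearMap.BilinForm ℝ H) (hBsymm : ∀ u v, B u v = B v u)
    (hBpsd : ∀ v, 0 ≤ B v v)
    (lam : ℕ → ℝ) (φ : ℕ → H) (hφ : Orthonormal ℝ φ)
    (hBφ : ∀ i j, B (φ i) (φ j) = if i = j then lam i else 0)
    (hminmax : ∀ k : ℕ, lam k = sInf {x : ℝ | ∃ S : Submodule ℝ H,
        Module.finrank ℝ S = k + 1 ∧
        x = sSup {y : ℝ | ∃ v ∈ S, ‖v‖ = 1 ∧ y = B v v}})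
    (K : ℕ) (ω : Fin K → ℝ) (hω : StrictAnti ω) (hωpos : ∀ i, 0 < ω i) :
    IsLeast {x : ℝ | ∃ f : Fin K → H, Orthonormal ℝ f ∧
        x = ∑ i : Fin K, ω i * B (f i) (f i)}
      (∑ i : Fin K, ω i * lam (i : ℕ)) ∧
    (∑ i : Fin K, ω i * B (φ (i : ℕ)) (φ (i : ℕ))) = ∑ i : Fin K, ω i * lam (i : ℕ) := by
  classical
  have hkf := kyFanAux B hBsymm hBpsd lam hminmax
  have hval : ∀ i : Fin K, B (φ (i : ℕ)) (φ (i : ℕ)) = lam (i : ℕ) := by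
    intro i; rw [hBφ]; simp
  have heq : (∑ i : Fin K, ω i * B (φ (i : ℕ)) (φ (i : ℕ))) = ∑ i : Fin K, ω i * lam (i : ℕ) :=
    Finset.sum_congr rfl fun i _ => by rw [hval]
  refine ⟨⟨⟨fun i => φ (i : ℕ), hφ.comp _ Fin.val_injective, heq.symm⟩, ?_⟩, heq⟩
  rintro x ⟨f, hf, rfl⟩
  set d : ℕ → ℝ := fun i => if h : i < K then B (f ⟨i, h⟩) (f ⟨i, h⟩) - lam i else 0 with hd
  set ωe : ℕ → ℝ := fun i => if h : i < K then ω ⟨i, h⟩ else 0 with hωedef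
  have hG : ∀ n, n ≤ K → 0 ≤ ∑ i ∈ Finset.range n, d i := by
    intro n hn
    rw [← Fin.sum_univ_eq_sum_range]
    have hdj : ∀ j : Fin n, d (j : ℕ) =
        B (f (Fin.castLE hn j)) (f (Fin.castLE hn j)) - lam (j : ℕ) := by
      intro j
      rw [hd]
      simp only []
      rw [dif_pos (lt_of_lt_of_le j.isLt hn)]
      rfl
    rw [Finset.sum_congr rfl fun j _ => hdj j, Finset.sum_sub_distrib]
    have := hkf n (fun j => f (Fin.castLE hn j)) (hf.comp _ (Fin.castLE_injective hn))
    linarith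
  have habel := Finset.sum_range_by_parts ωe d K
  have h1 : 0 ≤ ωe (K - 1) • ∑ i ∈ Finset.range K, d i := by
    rcases Nat.eq_zero_or_pos K with hK | hK
    · simp [hK]
    · refine smul_nonneg ?_ (hG K le_rfl)
      rw [hωedef]
      simp only []
      rw [dif_pos (Nat.sub_lt hK one_pos)]
      exact (hωpos _).le
  have h2 : ∑ i ∈ Finset.range (K - 1), (ωe (i + 1) - ωe i) • ∑ j ∈ Finset.range (i + 1), d j ≤ 0 := by
    refine Finset.sum_nonpos fun i hi => ?_
    have hiK : i + 1 < K := by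
      have := Finset.mem_range.mp hi; omega
    have hle : ωe (i + 1) - ωe i ≤ 0 := by
      rw [hωedef]
      simp only []
      rw [dif_pos hiK, dif_pos (by omega : i < K)]
      have : (⟨i, by omega⟩ : Fin K) < ⟨i + 1, hiK⟩ := by
        simp [Fin.mk_lt_mk]
      linarith [hω this]
    exact smul_nonpos_of_nonpos_of_nonneg hle (hG (i + 1) hiK.le)
  have h0 : 0 ≤ ∑ i ∈ Finset.range K, ωe i • d i := by
    rw [habel]; linarith
  have h3 : ∑ i ∈ Finset.range K, ωe i • d i =
      ∑ i : Fin K, ω i * (B (f i) (f i) - lam (i : ℕ)) := by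
    rw [← Fin.sum_univ_eq_sum_range]
    refine Finset.sum_congr rfl fun i _ => ?_
    rw [hd, hωedef]
    simp only []
    rw [dif_pos i.isLt, dif_pos i.isLt, smul_eq_mul]
  rw [h3] at h0
  have h4 : ∑ i : Fin K, ω i * (B (f i) (f i) - lam (i : ℕ)) =
      (∑ i : Fin K, ω i * B (f i) (f i)) - ∑ i : Fin K, ω i * lam (i : ℕ) := by
    rw [← Finset.sum_sub_distrib]
    exact Finset.sum_congr rfl fun i _ => by ring
  rw [h4] at h0
  linarith
end

section
/- Let H be a real Hilbert space, B a positive semidefinite symmetric bilinear form on H, and for orthonormal k-tuples (f₁,...,f_k) let F(f₁,...,f_k) be the k×k symmetric matrix with entries B(f_i, f_j). Suppose the min-max values λ_k := inf over k-dimensional subspaces of sup of B over unit vectors are attained by orthonormal eigenvectors. Then λ_k = min over orthonormal k-tuples (f₁,...,f_k) of the largest eigenvalue of F(f₁,...,f_k). -/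
open Finset Module Submodule RealInnerProductSpace

section helpers

variable {H : Type*} [NormedAddCommGroup H] [InnerProductSpace ℝ H]

private lemma expand_B (B : LinearMap.BilinForm ℝ H) {n : ℕ} (f : Fin n → H) (c : Fin n → ℝ) :
    B (∑ i, c i • f i) (∑ j, c j • f j) = ∑ i, ∑ j, c i * B (f i) (f j) * c j := by
  rw [map_sum]
  simp only [LinearMap.sum_apply, LinearMap.map_smul, LinearMap.smul_apply, map_sum,
    map_smul, smul_eq_mul, Finset.mul_sum]
  rw [Finset.sum_comm]
  exact Finset.sum_congr rfl fun i _ => Finset.sum_congr rfl fun j _ => by ring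

private def valSet (B : LinearMap.BilinForm ℝ H) (S : Submodule ℝ H) : Set ℝ :=
  {y : ℝ | ∃ v ∈ S, ‖v‖ = 1 ∧ y = B v v}

private lemma exists_unit (S : Submodule ℝ H) (hS : S ≠ ⊥) : ∃ v ∈ S, ‖v‖ = 1 := by
  obtain ⟨v, hv, hv0⟩ := Submodule.exists_mem_ne_zero_of_ne_bot hS
  exact ⟨‖v‖⁻¹ • v, S.smul_mem _ hv, norm_smul_inv_norm hv0⟩

private lemma norm_eq_one_of_sq {v : H} (h : ‖v‖ ^ 2 = 1) : ‖v‖ = 1 := by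
  have h3 : (‖v‖ - 1) * (‖v‖ + 1) = 0 := by ring_nf; nlinarith
  rcases mul_eq_zero.mp h3 with h | h
  · linarith
  · have := norm_nonneg v; linarith

private lemma coe_orthonormal (S : Submodule ℝ H) [FiniteDimensional ℝ S] :
    Orthonormal ℝ (fun i => ((stdOrthonormalBasis ℝ S i : S) : H)) := by
  rw [orthonormal_iff_ite]
  intro i j
  have := orthonormal_iff_ite.mp (stdOrthonormalBasis ℝ S).orthonormal i j
  rwa [Submodule.coe_inner] at this

private lemma valSet_bddAbove (B : LinearMap.BilinForm ℝ H) (S : Submodule ℝ H)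
    [FiniteDimensional ℝ S] : BddAbove (valSet B S) := by
  set e := stdOrthonormalBasis ℝ S with he
  set g : Fin (finrank ℝ S) → H := fun i => ((e i : S) : H) with hgdef
  refine ⟨∑ i, ∑ j, |B (g i) (g j)|, ?_⟩
  rintro y ⟨v, hv, hv1, rfl⟩
  set x : S := ⟨v, hv⟩ with hx
  set c : Fin (finrank ℝ S) → ℝ := fun i => e.repr x i with hc
  have hrep : v = ∑ i, c i • g i := by
    have h := e.sum_repr x
    have := congrArg (Subtype.val) h
    simpa [hgdef] using this.symm
  have hcb : ∀ i, |c i| ≤ 1 := by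
    intro i
    have h1 : c i = ⟪e i, x⟫ := e.repr_apply_apply x i
    have h2 : ‖x‖ = 1 := by rw [Submodule.coe_norm]; exact hv1
    have h3 : ‖e i‖ = 1 := e.orthonormal.1 i
    calc |c i| = |⟪e i, x⟫| := by rw [h1]
      _ ≤ ‖e i‖ * ‖x‖ := abs_real_inner_le_norm _ _
      _ = 1 := by rw [h2, h3, mul_one]
  calc B v v = ∑ i, ∑ j, c i * B (g i) (g j) * c j := by rw [hrep, expand_B]
    _ ≤ ∑ i, ∑ j, |B (g i) (g j)| := by
        refine Finset.sum_le_sum fun i _ => Finset.sum_le_sum fun j _ => ?_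
        calc c i * B (g i) (g j) * c j ≤ |c i * B (g i) (g j) * c j| := le_abs_self _
          _ = |c i| * |B (g i) (g j)| * |c j| := by rw [abs_mul, abs_mul]
          _ ≤ 1 * |B (g i) (g j)| * 1 := by
              have h1 := hcb i
              have h2 := hcb j
              have h3 : (0:ℝ) ≤ |B (g i) (g j)| := abs_nonneg _
              have h4 : (0:ℝ) ≤ |c i| := abs_nonneg _
              have h5 : (0:ℝ) ≤ |c j| := abs_nonneg _
              calc |c i| * |B (g i) (g j)| * |c j|
                  ≤ 1 * |B (g i) (g j)| * |c j| :=
                    mul_le_mul_of_nonneg_right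
                      (mul_le_mul_of_nonneg_right h1 h3) h5
                _ ≤ 1 * |B (g i) (g j)| * 1 :=
                    mul_le_mul_of_nonneg_left h2 (by positivity)
          _ = |B (g i) (g j)| := by ring

private lemma quadSet_eq (B : LinearMap.BilinForm ℝ H) {n : ℕ} (f : Fin n → H)
    (hf : Orthonormal ℝ f) :
    {y : ℝ | ∃ c : Fin n → ℝ, (∑ i, c i ^ 2 = 1) ∧
        y = ∑ i, ∑ j, c i * B (f i) (f j) * c j}
      = valSet B (Submodule.span ℝ (Set.range f)) := by
  ext y
  constructor
  · rintro ⟨c, hc, rfl⟩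
    refine ⟨∑ i, c i • f i,
      Submodule.sum_mem _ fun i _ => Submodule.smul_mem _ _ (Submodule.subset_span ⟨i, rfl⟩),
      ?_, (expand_B B f c).symm⟩
    apply norm_eq_one_of_sq
    rw [← real_inner_self_eq_norm_sq, hf.inner_sum]
    simpa [sq] using hc
  · rintro ⟨v, hv, hv1, rfl⟩
    rw [mem_span_range_iff_exists_fun] at hv
    obtain ⟨c, rfl⟩ := hv
    refine ⟨c, ?_, expand_B B f c⟩
    have h := hf.inner_sum c c Finset.univ
    rw [real_inner_self_eq_norm_sq, hv1] at h
    simpa [sq] using h.symm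

end helpers

/-- Equivalent variational formulation (2.18): if the min-max values `λ_k` of a positive
semidefinite symmetric bilinear form `B` are attained by orthonormal eigenvectors
`(φ_i)` with `B(φ_i,φ_j) = λ_i δ_{ij}`, then `λ_k` is the minimum over orthonormal
`k`-tuples `(f₁,...,f_k)` of the largest eigenvalue of the Gram matrix `B(f_i,f_j)`. -/
theorem stmt_16 {H : Type*} [NormedAddCommGroup H] [InnerProductSpace ℝ H] [CompleteSpace H]
    (B : LinearMap.BilinForm ℝ H) (hBsymm : ∀ u v, B u v = B v u)
    (hBpsd : ∀ v, 0 ≤ B v v)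
    (lam : ℕ → ℝ) (φ : ℕ → H) (hφ : Orthonormal ℝ φ)
    (hBφ : ∀ i j, B (φ i) (φ j) = if i = j then lam i else 0)
    (hminmax : ∀ k : ℕ, lam k = sInf {x : ℝ | ∃ S : Submodule ℝ H,
        Module.finrank ℝ S = k + 1 ∧
        x = sSup {y : ℝ | ∃ v ∈ S, ‖v‖ = 1 ∧ y = B v v}})
    (k : ℕ) :
    IsLeast {x : ℝ | ∃ f : Fin (k + 1) → H, Orthonormal ℝ f ∧
        x = sSup {y : ℝ | ∃ c : Fin (k + 1) → ℝ, (∑ i, c i ^ 2 = 1) ∧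
          y = ∑ i, ∑ j, c i * B (f i) (f j) * c j}}
      (lam k) := by
  classical
  -- the min-max sets
  set A : ℕ → Set ℝ := fun m => {x : ℝ | ∃ S : Submodule ℝ H,
      Module.finrank ℝ S = m + 1 ∧ x = sSup (valSet B S)} with hA
  have hminmax' : ∀ m : ℕ, lam m = sInf (A m) := hminmax
  -- every element of A m is nonnegative
  have hAnonneg : ∀ m, ∀ x ∈ A m, (0:ℝ) ≤ x := by
    rintro m x ⟨S, hfr, rfl⟩
    haveI : FiniteDimensional ℝ S := Module.finite_of_finrank_pos (by omega)
    have hSne : S ≠ ⊥ := by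
      intro h; rw [h, finrank_bot] at hfr; omega
    obtain ⟨v, hv, hv1⟩ := exists_unit S hSne
    exact le_trans (hBpsd v) (le_csSup (valSet_bddAbove B S) ⟨v, hv, hv1, rfl⟩)
  have hAbdd : ∀ m, BddBelow (A m) := fun m => ⟨0, fun x hx => hAnonneg m x hx⟩
  -- A m is nonempty (span of eigenvectors)
  have hAne : ∀ m, (A m).Nonempty := by
    intro m
    refine ⟨_, ⟨Submodule.span ℝ (Set.range fun i : Fin (m+1) => φ i), ?_, rfl⟩⟩
    have li : LinearIndependent ℝ (fun i : Fin (m+1) => φ i) :=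
      (hφ.comp Fin.val Fin.val_injective).linearIndependent
    simpa using finrank_span_eq_card li
  -- monotonicity of lam
  have hmono : Monotone lam := by
    apply monotone_nat_of_le_succ
    intro m
    rw [hminmax' m, hminmax' (m+1)]
    refine le_csInf (hAne (m+1)) ?_
    rintro x ⟨S, hfr, rfl⟩
    haveI : FiniteDimensional ℝ S := Module.finite_of_finrank_pos (by omega)
    set g : Fin (finrank ℝ S) → H := fun i => ((stdOrthonormalBasis ℝ S i : S) : H) with hg
    have hgo : Orthonormal ℝ g := coe_orthonormal S
    set ι : Fin (m+1) → Fin (finrank ℝ S) := fun i => ⟨i.1, by rw [hfr]; omega⟩ with hι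
    have hιinj : Function.Injective ι := by
      intro a b hab
      have h2 := congrArg Fin.val hab
      exact Fin.ext h2
    have hgo' : Orthonormal ℝ (g ∘ ι) := hgo.comp ι hιinj
    set T : Submodule ℝ H := Submodule.span ℝ (Set.range (g ∘ ι)) with hT
    have hfrT : finrank ℝ T = m + 1 := by
      simpa using finrank_span_eq_card hgo'.linearIndependent
    have hTS : T ≤ S := by
      rw [hT, Submodule.span_le]
      rintro _ ⟨i, rfl⟩
      exact SetLike.coe_mem _
    haveI : FiniteDimensional ℝ T := Module.finite_of_finrank_pos (by omega)
    have hTne : T ≠ ⊥ := by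
      intro h; rw [h, finrank_bot] at hfrT; omega
    calc sInf (A m) ≤ sSup (valSet B T) := csInf_le (hAbdd m) ⟨T, hfrT, rfl⟩
      _ ≤ sSup (valSet B S) := by
          refine csSup_le_csSup (valSet_bddAbove B S) ?_ ?_
          · obtain ⟨v, hv, hv1⟩ := exists_unit T hTne
            exact ⟨_, v, hv, hv1, rfl⟩
          · rintro y ⟨v, hv, hv1, rfl⟩
            exact ⟨v, hTS hv, hv1, rfl⟩
  constructor
  · -- membership: take f i = φ i
    refine ⟨fun i : Fin (k+1) => φ i, hφ.comp Fin.val Fin.val_injective, ?_⟩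
    have hset : ∀ c : Fin (k+1) → ℝ,
        (∑ i : Fin (k+1), ∑ j : Fin (k+1), c i * B (φ i) (φ j) * c j) = ∑ i : Fin (k+1), lam (i : ℕ) * c i ^ 2 := by
      intro c
      refine Finset.sum_congr rfl fun i _ => ?_
      rw [Finset.sum_eq_single i]
      · rw [hBφ]; simp; ring
      · intro j _ hj
        rw [hBφ]
        rw [if_neg (fun h => hj (Fin.val_injective h).symm)]
        ring
      · intro h; exact absurd (Finset.mem_univ i) h
    have hgreat : IsGreatest {y : ℝ | ∃ c : Fin (k + 1) → ℝ, (∑ i, c i ^ 2 = 1) ∧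
          y = ∑ i : Fin (k+1), ∑ j : Fin (k+1), c i * B (φ i) (φ j) * c j} (lam k) := by
      constructor
      · refine ⟨fun i => if i = Fin.last k then 1 else 0, ?_, ?_⟩
        · simp [apply_ite (· ^ 2)]
        · rw [hset]
          simp [apply_ite (· ^ 2), mul_ite]
      · rintro y ⟨c, hc, rfl⟩
        rw [hset]
        calc (∑ i : Fin (k+1), lam (i:ℕ) * c i ^ 2)
            ≤ ∑ i : Fin (k+1), lam k * c i ^ 2 :=
              Finset.sum_le_sum fun i _ =>
                mul_le_mul_of_nonneg_right (hmono (Fin.is_le i)) (sq_nonneg _)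
          _ = lam k := by rw [← Finset.mul_sum, hc, mul_one]
    exact hgreat.csSup_eq.symm
  · -- lower bound
    rintro x ⟨f, hf, rfl⟩
    rw [hminmax' k]
    rw [quadSet_eq B f hf]
    refine csInf_le (hAbdd k) ⟨Submodule.span ℝ (Set.range f), ?_, rfl⟩
    simpa using finrank_span_eq_card hf.linearIndependent
end
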